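/- Let X be a separable metric space and μ a Borel probability measure on X. Then the set G of sequences (x_i)_{i∈ℕ} in X that are generic for μ — i.e. whose empirical measures converge narrowly to μ — has full measure under the countable product measure μ^⊗ℕ on the sequence space X^ℕ. -/

import Mathlib

open MeasureTheory Filter Topology
open scoped BoundedContinuousFunction

/-- A sequence `x : ℕ → X` is *generic* for a Borel probability measure `μ` if its empirical
measures `μ_n = (1/n)(δ_{x 0} + … + δ_{x (n-1)})` converge narrowly to `μ`, i.e. the averages
of every bounded continuous function along the sequence converge to its `μ`-integral. -/
def Generic {X : Type*} [TopologicalSpace X] [MeasurableSpace X]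
    (μ : Measure X) (x : ℕ → X) : Prop :=
  ∀ φ : X →ᵇ ℝ,
    Tendsto (fun n : ℕ => (∑ i ∈ Finset.range n, φ (x i)) / (n : ℝ))
      atTop (𝓝 (∫ a, φ a ∂μ))

open ProbabilityTheory
open scoped ENNReal NNReal

lemma pi_map_eval {X : Type*} [MeasurableSpace X] {n : ℕ}
    (μ : Measure X) [IsProbabilityMeasure μ] (i : Fin n) :
    (Measure.pi (fun _ : Fin n => μ)).map (Function.eval i) = μ := by
  ext s hs
  rw [Measure.map_apply (measurable_pi_apply i) hs, Set.eval_preimage, Measure.pi_pi]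
  simp_rw [Function.apply_update (fun _ y => μ y)]
  rw [Finset.prod_update_of_mem (Finset.mem_univ i)]
  simp

lemma law_eval {X : Type*} [MeasurableSpace X] (μ : Measure X) [IsProbabilityMeasure μ]
    (P : Measure (ℕ → X))
    (hP : ∀ n : ℕ, P.map (fun x (i : Fin n) => x i) = Measure.pi (fun _ : Fin n => μ))
    (i : ℕ) : P.map (fun ω => ω i) = μ := by
  have hmeas : Measurable (fun (x : ℕ → X) (k : Fin (i+1)) => x k) :=
    measurable_pi_lambda _ fun k => measurable_pi_apply _
  have : (fun ω : ℕ → X => ω i)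
      = (Function.eval (⟨i, lt_add_one i⟩ : Fin (i+1)))
        ∘ (fun (x : ℕ → X) (k : Fin (i+1)) => x k) := rfl
  rw [this, ← Measure.map_map (measurable_pi_apply _) hmeas, hP, pi_map_eval]

lemma indep_eval {X : Type*} [MeasurableSpace X] (μ : Measure X) [IsProbabilityMeasure μ]
    (P : Measure (ℕ → X)) [IsProbabilityMeasure P]
    (hP : ∀ n : ℕ, P.map (fun x (i : Fin n) => x i) = Measure.pi (fun _ : Fin n => μ)) :
    iIndepFun (fun (i : ℕ) (ω : ℕ → X) => ω i) P := by
  rw [iIndepFun_iff_measure_inter_preimage_eq_mul]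
  intro s sets h_meas
  have prw : ∀ i ∈ s, P ((fun ω : ℕ → X => ω i) ⁻¹' sets i) = μ (sets i) := by
    intro i hi
    rw [← law_eval μ P hP i, Measure.map_apply (measurable_pi_apply i) (h_meas i hi)]
  set n := s.sup id + 1 with hn
  have hlt : ∀ i ∈ s, i < n := fun i hi => Nat.lt_succ_of_le (Finset.le_sup (f := id) hi)
  set F : Fin n → Set X := fun k => if (k : ℕ) ∈ s then sets k else Set.univ with hF
  have hFm : ∀ k, MeasurableSet (F k) := by
    intro k
    by_cases h : (k : ℕ) ∈ s
    · simpa [hF, h] using h_meas _ h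
    · simp [hF, h]
  have hpre : (fun (x : ℕ → X) (k : Fin n) => x k) ⁻¹' (Set.pi Set.univ F)
      = ⋂ i ∈ s, (fun ω : ℕ → X => ω i) ⁻¹' sets i := by
    ext ω
    simp only [Set.mem_preimage, Set.mem_pi, Set.mem_univ, forall_true_left, Set.mem_iInter, hF]
    constructor
    · intro h i hi
      have := h ⟨i, hlt i hi⟩
      simpa [hi] using this
    · intro h k
      by_cases hk : (k : ℕ) ∈ s
      · simpa [hk] using h k hk
      · simp [hk]
  have hmeas : Measurable (fun (x : ℕ → X) (k : Fin n) => x k) :=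
    measurable_pi_lambda _ fun k => measurable_pi_apply _
  rw [← hpre, ← Measure.map_apply hmeas (MeasurableSet.univ_pi hFm), hP, Measure.pi_pi]
  rw [Finset.prod_congr rfl prw]
  have key : ∀ k : Fin n, μ (F k) = if (k : ℕ) ∈ s then μ (sets k) else 1 := by
    intro k; by_cases h : (k : ℕ) ∈ s <;> simp [hF, h]
  rw [Finset.prod_congr rfl (fun k _ => key k), ← Finset.prod_filter]
  refine Finset.prod_bij (fun k _ => (k : ℕ)) ?_ ?_ ?_ ?_
  · intro k hk; simpa using (Finset.mem_filter.mp hk).2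
  · intro a ha b hb h; exact Fin.ext h
  · intro i hi; exact ⟨⟨i, hlt i hi⟩, Finset.mem_filter.mpr ⟨Finset.mem_univ _, hi⟩, rfl⟩
  · intro k hk; rfl
open scoped ENNReal NNReal BoundedContinuousFunction

noncomputable def emp {X : Type*} [MeasurableSpace X] (x : ℕ → X) (n : ℕ) : Measure X :=
  ((n : ℝ≥0∞) + 1)⁻¹ • ∑ i ∈ Finset.range (n + 1), Measure.dirac (x i)

lemma emp_prob {X : Type*} [MeasurableSpace X] (x : ℕ → X) (n : ℕ) :
    IsProbabilityMeasure (emp x n) := by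
  constructor
  simp only [emp, Measure.smul_apply, Measure.coe_finset_sum, Finset.sum_apply,
    Measure.dirac_apply_of_mem (Set.mem_univ _), Finset.sum_const, Finset.card_range,
    nsmul_eq_mul, mul_one, smul_eq_mul]
  rw [← Nat.cast_one (R := ℝ≥0∞), ← Nat.cast_add, ENNReal.inv_mul_cancel] <;> simp

lemma emp_integral {X : Type*} [MetricSpace X] [MeasurableSpace X] [BorelSpace X]
    (x : ℕ → X) (n : ℕ) (φ : X →ᵇ ℝ) :
    ∫ a, φ a ∂(emp x n) = (∑ i ∈ Finset.range (n + 1), φ (x i)) / ((n : ℝ) + 1) := by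
  have hi : ∀ i ∈ Finset.range (n + 1), Integrable (fun a => φ a) (Measure.dirac (x i)) :=
    fun i _ => φ.integrable _
  rw [emp, integral_smul_measure, integral_finset_sum_measure hi]
  simp only [integral_dirac]
  rw [ENNReal.toReal_inv, smul_eq_mul,
    ENNReal.toReal_add (by simp) (by simp), ENNReal.toReal_one, ENNReal.toReal_natCast]
  ring

lemma emp_apply_toReal {X : Type*} [MeasurableSpace X] (x : ℕ → X) (n : ℕ)
    {s : Set X} (hs : MeasurableSet s) :
    ((emp x n) s).toReal
      = (∑ i ∈ Finset.range (n + 1), s.indicator (1 : X → ℝ) (x i)) / ((n : ℝ) + 1) := by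
  have hval : ∀ i ∈ Finset.range (n+1),
      ((Measure.dirac (x i)) s).toReal = s.indicator (1 : X → ℝ) (x i) := by
    intro i _
    rw [Measure.dirac_apply' _ hs]
    by_cases h : x i ∈ s <;> simp [h]
  have hne : ∀ i ∈ Finset.range (n+1), (Measure.dirac (x i)) s ≠ ∞ := by
    intro i _
    rw [Measure.dirac_apply' _ hs]
    by_cases h : x i ∈ s <;> simp [h]
  simp only [emp, Measure.smul_apply, Measure.coe_finset_sum, Finset.sum_apply, smul_eq_mul]
  rw [ENNReal.toReal_mul, ENNReal.toReal_inv, ENNReal.toReal_sum hne,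
    Finset.sum_congr rfl hval,
    ENNReal.toReal_add (by simp) (by simp), ENNReal.toReal_one, ENNReal.toReal_natCast]
  ring

open scoped BoundedContinuousFunction

/-- Let `X` be a separable metric space and `μ` a Borel probability measure
on `X`. Then the set of sequences generic for `μ` has full measure under the countable product
measure `μ^⊗ℕ` on `ℕ → X`; here the product measure is characterized as the (unique) probability
measure on `ℕ → X` whose finite-dimensional marginals are the finite product measures. -/
theorem generic_full_measure
    {X : Type*} [MetricSpace X] [TopologicalSpace.SeparableSpace X]
    [MeasurableSpace X] [BorelSpace X]
    (μ : Measure X) [IsProbabilityMeasure μ]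
    (P : Measure (ℕ → X)) [IsProbabilityMeasure P]
    (hP : ∀ n : ℕ, P.map (fun x (i : Fin n) => x i) = Measure.pi (fun _ : Fin n => μ)) :
    P {x : ℕ → X | Generic μ x} = 1 := by
  show P {x : ℕ → X | ∀ φ : X →ᵇ ℝ,
      Tendsto (fun n : ℕ => (∑ i ∈ Finset.range n, φ (x i)) / (n : ℝ))
        atTop (𝓝 (∫ a, φ a ∂μ))} = 1
  have : SecondCountableTopology X := UniformSpace.secondCountable_of_separable X
  obtain ⟨B, hBc, -, hB⟩ := TopologicalSpace.exists_countable_basis X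
  set S : Set (Set X) := (fun t => ⋃₀ t) '' {t : Set (Set X) | t.Finite ∧ t ⊆ B} with hS
  have hSc : S.Countable := (Set.countable_setOf_finite_subset hBc).image _
  have hSopen : ∀ U ∈ S, IsOpen U := by
    rintro U ⟨t, ⟨-, htB⟩, rfl⟩
    exact isOpen_sUnion fun b hb => hB.isOpen (htB hb)
  have hSmeas : ∀ U ∈ S, MeasurableSet U := fun U hU => (hSopen U hU).measurableSet
  -- SLLN for indicators of members of S
  have hae : ∀ᵐ x ∂P, ∀ U ∈ S, Tendsto
      (fun n : ℕ => (∑ i ∈ Finset.range n, U.indicator (1 : X → ℝ) (x i)) / (n : ℝ))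
      atTop (𝓝 ((μ U).toReal)) := by
    rw [ae_ball_iff hSc]
    intro U hU
    have hUm := hSmeas U hU
    have hg : Measurable (U.indicator (1 : X → ℝ)) := measurable_const.indicator hUm
    set Y : ℕ → (ℕ → X) → ℝ := fun i ω => U.indicator (1 : X → ℝ) (ω i) with hY
    have hYm : ∀ i, Measurable (Y i) := fun i => hg.comp (measurable_pi_apply i)
    have hint : Integrable (Y 0) P := by
      refine (integrable_const (1 : ℝ)).mono' (hYm 0).aestronglyMeasurable ?_
      refine Eventually.of_forall fun ω => ?_
      by_cases h : ω 0 ∈ U <;> simp [hY, h]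
    have hindep : Pairwise (Function.onFun (IndepFun · · P) Y) := by
      intro i j hij
      exact ((indep_eval μ P hP).comp (fun _ => U.indicator 1) fun _ => hg).indepFun hij
    have hident : ∀ i, IdentDistrib (Y i) (Y 0) P P := by
      intro i
      have hid : IdentDistrib (fun ω : ℕ → X => ω i) (fun ω : ℕ → X => ω 0) P P :=
        ⟨(measurable_pi_apply i).aemeasurable, (measurable_pi_apply 0).aemeasurable,
          by rw [law_eval μ P hP, law_eval μ P hP]⟩
      exact hid.comp hg
    have hE : P[Y 0] = (μ U).toReal := by
      have h1 : P[Y 0] = ∫ a, U.indicator (1 : X → ℝ) a ∂(P.map (fun ω => ω 0)) := by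
        rw [integral_map (measurable_pi_apply 0).aemeasurable hg.aestronglyMeasurable]
      rw [h1, law_eval μ P hP, integral_indicator_one hUm, measureReal_def]
    have hsl := strong_law_ae_real Y hint hindep hident
    rw [hE] at hsl
    exact hsl
  have hfull : ∀ᵐ x ∂P, x ∈ {x : ℕ → X | ∀ φ : X →ᵇ ℝ,
      Tendsto (fun n : ℕ => (∑ i ∈ Finset.range n, φ (x i)) / (n : ℝ))
        atTop (𝓝 (∫ a, φ a ∂μ))} := by
    filter_upwards [hae] with x hx
    have hexp : ∀ n, IsProbabilityMeasure (emp x n) := emp_prob x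
    set ν : ℕ → ProbabilityMeasure X := fun n => ⟨emp x n, hexp n⟩ with hν
    set μP : ProbabilityMeasure X := ⟨μ, inferInstance⟩ with hμP
    have hUconv : ∀ U ∈ S, Tendsto (fun n => (ν n) U) atTop (𝓝 (μP U)) := by
      intro U hU
      have hUm := hSmeas U hU
      have h1 : Tendsto (fun n : ℕ =>
          (∑ i ∈ Finset.range (n+1), U.indicator (1 : X → ℝ) (x i)) / ((n : ℝ) + 1))
          atTop (𝓝 ((μ U).toReal)) := by
        have h0 := (hx U hU).comp (tendsto_add_atTop_nat 1)
        simpa only [Function.comp_def, Nat.cast_add, Nat.cast_one] using h0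
      have h2 : ∀ n : ℕ, (((ν n) U : ℝ≥0) : ℝ)
          = (∑ i ∈ Finset.range (n+1), U.indicator (1 : X → ℝ) (x i)) / ((n : ℝ) + 1) := by
        intro n
        rw [← emp_apply_toReal x n hUm]
        rfl
      rw [← NNReal.tendsto_coe]
      simp only [h2]
      exact h1
    have key : Tendsto ν atTop (𝓝 μP) := by
      apply tendsto_of_forall_isOpen_le_liminf
      intro G hG
      have hle : ∀ U ∈ S, U ⊆ G → μP U ≤ atTop.liminf fun n => (ν n) G := by
        intro U hU hUG
        have hlim : atTop.liminf (fun n => (ν n) U) = μP U := (hUconv U hU).liminf_eq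
        rw [← hlim]
        refine liminf_le_liminf (Eventually.of_forall fun n => (ν n).apply_mono hUG) ?_ ?_
        · have hb : IsBoundedUnder (· ≥ ·) atTop (fun n => (ν n) U) :=
            ⟨0, eventually_map.mpr (Eventually.of_forall fun n => by simp)⟩
          exact hb
        · have hb : IsBoundedUnder (· ≤ ·) atTop (fun n => (ν n) G) :=
            ⟨1, eventually_map.mpr (Eventually.of_forall fun n =>
              ProbabilityMeasure.apply_le_one _ _)⟩
          exact hb.isCoboundedUnder_ge
      have hGC : G = ⋃₀ {b ∈ B | b ⊆ G} := hB.open_eq_sUnion' hG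
      rcases Set.eq_empty_or_nonempty {b ∈ B | b ⊆ G} with hCe | hCne
      · have hGe : G = ∅ := by rw [hGC, hCe]; simp
        simp [hGe]
      · obtain ⟨f, hf⟩ := (hBc.mono (Set.sep_subset _ _)).exists_eq_range hCne
        have hfC : ∀ j, f j ∈ {b ∈ B | b ⊆ G} := fun j => by rw [hf]; exact ⟨j, rfl⟩
        set U : ℕ → Set X := fun k => ⋃₀ (f '' Set.Iic k) with hUdef
        have hUS : ∀ k, U k ∈ S := by
          intro k
          refine ⟨f '' Set.Iic k, ⟨(Set.finite_Iic k).image f, ?_⟩, rfl⟩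
          rintro b ⟨j, -, rfl⟩
          exact (hfC j).1
        have hUG : ∀ k, U k ⊆ G := by
          intro k
          rintro y ⟨b, ⟨j, -, rfl⟩, hyb⟩
          exact (hfC j).2 hyb
        have hmono : Monotone U := fun a b hab =>
          Set.sUnion_subset_sUnion (Set.image_mono (Set.Iic_subset_Iic.mpr hab))
        have hUnion : ⋃ k, U k = G := by
          apply Set.Subset.antisymm (Set.iUnion_subset hUG)
          rw [hGC, hf]
          rintro y ⟨b, ⟨j, rfl⟩, hyb⟩
          exact Set.mem_iUnion.mpr ⟨j, ⟨f j, ⟨j, Set.mem_Iic.mpr le_rfl, rfl⟩, hyb⟩⟩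
        have htendμ : Tendsto (fun k => μ (U k)) atTop (𝓝 (μ G)) := by
          have := tendsto_measure_iUnion_atTop (μ := μ) hmono
          rwa [hUnion] at this
        have htendP : Tendsto (fun k => μP (U k)) atTop (𝓝 (μP G)) :=
          (ENNReal.tendsto_toNNReal (measure_ne_top μ G)).comp htendμ
        exact le_of_tendsto htendP
          (Eventually.of_forall fun k => hle (U k) (hUS k) (hUG k))
    intro φ
    have h := ProbabilityMeasure.tendsto_iff_forall_integral_tendsto.mp key φ
    have h2 : Tendsto (fun n : ℕ => (∑ i ∈ Finset.range (n+1), φ (x i)) / ((n : ℝ) + 1))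
        atTop (𝓝 (∫ a, φ a ∂μ)) := by
      have he : ∀ n : ℕ, ∫ ω, φ ω ∂((ν n : ProbabilityMeasure X) : Measure X)
          = (∑ i ∈ Finset.range (n+1), φ (x i)) / ((n : ℝ) + 1) := fun n => emp_integral x n φ
      simp only [he] at h
      exact h
    refine (tendsto_add_atTop_iff_nat 1).mp ?_
    convert h2 using 2 with n
    push_cast
    ring
  refine le_antisymm prob_le_one ?_
  have hc : P {x : ℕ → X | ∀ φ : X →ᵇ ℝ,
      Tendsto (fun n : ℕ => (∑ i ∈ Finset.range n, φ (x i)) / (n : ℝ))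
        atTop (𝓝 (∫ a, φ a ∂μ))}ᶜ = 0 := by
    rw [Set.compl_setOf]
    simpa [ae_iff] using hfull
  have hu := measure_union_le (μ := P)
    {x : ℕ → X | ∀ φ : X →ᵇ ℝ,
      Tendsto (fun n : ℕ => (∑ i ∈ Finset.range n, φ (x i)) / (n : ℝ))
        atTop (𝓝 (∫ a, φ a ∂μ))}
    {x : ℕ → X | ∀ φ : X →ᵇ ℝ,
      Tendsto (fun n : ℕ => (∑ i ∈ Finset.range n, φ (x i)) / (n : ℝ))
        atTop (𝓝 (∫ a, φ a ∂μ))}ᶜ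
  rw [Set.union_compl_self, measure_univ, hc, add_zero] at hu
  exact hu
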